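/- Let T be a tree (a partial order in which the set of predecessors of each element is well-ordered) that is rooted and Hausdorff, and such that for any two incomparable elements s, t the set of common strict predecessors has a maximal element s ∧ t. Let ≺ be any linear order on T. Define s ≤ t iff s ⊑ t, or s and t are incomparable and the immediate successor of s∧t below s strictly ≺-precedes the immediate successor of s∧t below t. Then ≤ is a linear order on T. -/
import Mathlib


/-- The lexicographic order on a rooted Hausdorff tree with meets is a linear order.
`meet s t` is the maximal common strict predecessor of incomparable `s, t`, and
`step s t` is the immediate successor of `meet s t` lying below (or equal to) `s`. -/
theorem stmt12 (T : Type*) [PartialOrder T]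
    -- tree: predecessor sets are well-ordered
    (hWF : ∀ x : T, (Set.Iio x).IsWF)
    (hchain : ∀ x : T, ∀ y ∈ Set.Iio x, ∀ z ∈ Set.Iio x, y ≤ z ∨ z ≤ y)
    -- rooted
    (hroot : ∃ r : T, ∀ x, r ≤ x)
    -- Hausdorff: at limit levels, elements are determined by their predecessors
    (hHaus : ∀ x y : T, (¬ ∃ p, p < x ∧ ∀ z, z < x → z ≤ p) → Set.Iio x = Set.Iio y → x = y)
    -- meets of incomparable elements exist
    (meet : T → T → T)
    (hmeet : ∀ s t : T, ¬ s ≤ t → ¬ t ≤ s →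
      meet s t < s ∧ meet s t < t ∧ ∀ z, z < s → z < t → z ≤ meet s t)
    -- the immediate successor of `meet s t` below `s`
    (step : T → T → T)
    (hstep : ∀ s t : T, ¬ s ≤ t → ¬ t ≤ s →
      meet s t < step s t ∧ step s t ≤ s ∧ ∀ z, meet s t < z → z ≤ s → step s t ≤ z)
    -- an arbitrary linear (strict total) order on T
    (prec : T → T → Prop) [IsStrictTotalOrder T prec]
    -- the lexicographic order
    (le' : T → T → Prop)
    (hle' : ∀ s t, le' s t ↔ s ≤ t ∨ (¬ s ≤ t ∧ ¬ t ≤ s ∧ prec (step s t) (step t s))) :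
    (∀ s, le' s s) ∧ (∀ s t u, le' s t → le' t u → le' s u) ∧
      (∀ s t, le' s t → le' t s → s = t) ∧ (∀ s t, le' s t ∨ le' t s) := by
  -- comparability of two elements below a common element
  have comp : ∀ {x y w : T}, x ≤ w → y ≤ w → x ≤ y ∨ y ≤ x := by
    intro x y w hx hy
    rcases eq_or_lt_of_le hx with rfl | hx
    · right; exact hy
    rcases eq_or_lt_of_le hy with rfl | hy
    · left; exact hx.le
    exact hchain w x hx y hy
  -- symmetry of meet
  have msymm : ∀ s t : T, ¬ s ≤ t → ¬ t ≤ s → meet s t = meet t s := by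
    intro s t h1 h2
    obtain ⟨a1, a2, a3⟩ := hmeet s t h1 h2
    obtain ⟨b1, b2, b3⟩ := hmeet t s h2 h1
    exact le_antisymm (b3 _ a2 a1) (a3 _ b2 b1)
  -- uniqueness of minimal elements above m and below s
  have stepuniq : ∀ (m s a b : T), m < a → a ≤ s → (∀ z, m < z → z ≤ s → a ≤ z) →
      m < b → b ≤ s → (∀ z, m < z → z ≤ s → b ≤ z) → a = b := by
    intro m s a b ha1 ha2 ha3 hb1 hb2 hb3
    exact le_antisymm (ha3 b hb1 hb2) (hb3 a ha1 ha2)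
  -- step s t depends only on s and meet s t
  have stepEqFst : ∀ s t u : T, ¬ s ≤ t → ¬ t ≤ s → ¬ s ≤ u → ¬ u ≤ s →
      meet s t = meet s u → step s t = step s u := by
    intro s t u h1 h2 h3 h4 hm
    obtain ⟨a1, a2, a3⟩ := hstep s t h1 h2
    obtain ⟨b1, b2, b3⟩ := hstep s u h3 h4
    rw [hm] at a1 a3
    exact stepuniq (meet s u) s _ _ a1 a2 a3 b1 b2 b3
  -- step is invariant on the first coordinate when it moves up and the meet is unchanged
  have stepLe : ∀ s t u : T, ¬ s ≤ u → ¬ u ≤ s → ¬ t ≤ u → ¬ u ≤ t → s ≤ t →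
      meet s u = meet t u → step s u = step t u := by
    intro s t u h1 h2 h3 h4 hst hm
    obtain ⟨a1, a2, a3⟩ := hstep s u h1 h2
    obtain ⟨b1, b2, b3⟩ := hstep t u h3 h4
    rw [hm] at a1 a3
    have h5 : step t u ≤ step s u := b3 _ a1 (a2.trans hst)
    have h6 : step s u ≤ step t u := a3 _ b1 (h5.trans a2)
    exact le_antisymm h6 h5
  refine ⟨fun s => (hle' s s).mpr (Or.inl le_rfl), ?_, ?_, ?_⟩
  · -- transitivity
    intro s t u hst htu
    rw [hle'] at hst htu ⊢
    by_cases hsu : s ≤ u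
    · exact Or.inl hsu
    rcases hst with hst | ⟨hst, hts, hab⟩
    · rcases htu with htu | ⟨htu, hut, hcd⟩
      · exact absurd (hst.trans htu) hsu
      · -- case 2 : s ≤ t, t ⊥ u
        have hus : ¬ u ≤ s := fun h => hut (h.trans hst)
        obtain ⟨m1, m2, m3⟩ := hmeet t u htu hut
        obtain ⟨M1, M2, M3⟩ := hmeet s u hsu hus
        have hms : meet t u < s := by
          rcases comp m1.le hst with h | h
          · rcases eq_or_lt_of_le h with rfl | h
            · exact absurd m2.le hsu
            · exact h
          · exact absurd (h.trans m2.le) hsu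
        have hMeq : meet s u = meet t u :=
          le_antisymm (m3 _ (M1.trans_le hst) M2) (M3 _ hms m2)
        have e1 : step s u = step t u := stepLe s t u hsu hus htu hut hst hMeq
        have e2 : step u s = step u t := by
          apply stepEqFst u s t hus hsu hut htu
          rw [msymm u s hus hsu, msymm u t hut htu, hMeq]
        exact Or.inr ⟨hsu, hus, by rw [e1, e2]; exact hcd⟩
    · rcases htu with htu | ⟨htu, hut, hcd⟩
      · -- case 3 : s ⊥ t, t ≤ u
        have hus : ¬ u ≤ s := fun h => hts (htu.trans h)
        obtain ⟨m1, m2, m3⟩ := hmeet s t hst hts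
        obtain ⟨M1, M2, M3⟩ := hmeet s u hsu hus
        have hMt : meet s u < t := by
          rcases comp M2.le htu with h | h
          · rcases eq_or_lt_of_le h with rfl | h
            · exact absurd M1.le hts
            · exact h
          · exact absurd (h.trans M1.le) hts
        have hMeq : meet s u = meet s t :=
          le_antisymm (m3 _ M1 hMt) (M3 _ m1 (m2.trans_le htu))
        have e1 : step s u = step s t := stepEqFst s u t hsu hus hst hts hMeq
        have e2 : step u s = step t s := by
          refine (stepLe t u s hts hst hus hsu htu ?_).symm
          rw [msymm t s hts hst, msymm u s hus hsu, hMeq]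
        exact Or.inr ⟨hsu, hus, by rw [e1, e2]; exact hab⟩
      · -- case 4 : s ⊥ t, t ⊥ u
        obtain ⟨m1, m2, m3⟩ := hmeet s t hst hts
        obtain ⟨n1, n2, n3⟩ := hmeet t u htu hut
        obtain ⟨a1, a2, a3⟩ := hstep s t hst hts
        obtain ⟨b1, b2, b3⟩ := hstep t s hts hst
        obtain ⟨c1, c2, c3⟩ := hstep t u htu hut
        obtain ⟨d1, d2, d3⟩ := hstep u t hut htu
        rw [msymm t s hts hst] at b1 b3
        rw [msymm u t hut htu] at d1 d3
        rcases comp m2.le n1.le with hmn | hnm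
        · rcases eq_or_lt_of_le hmn with hmn | hmn
          · -- meet s t = meet t u
            have ebc : step t s = step t u := by
              apply stepEqFst t s u hts hst htu hut
              rw [msymm t s hts hst]; exact hmn
            have had : prec (step s t) (step u t) := by
              refine trans_of prec hab ?_
              rw [ebc]; exact hcd
            have hus : ¬ u ≤ s := by
              intro h
              have h1 : step s t ≤ step u t := a3 _ (by rw [hmn]; exact d1) (d2.trans h)
              have h2 : step u t ≤ step s t := d3 _ (by rw [← hmn]; exact a1) (h1.trans d2)
              exact irrefl_of prec _ ((le_antisymm h1 h2) ▸ had)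
            obtain ⟨M1, M2, M3⟩ := hmeet s u hsu hus
            have hmM : meet s t ≤ meet s u := M3 _ m1 (by rw [hmn]; exact n2)
            have hMm : meet s u = meet s t := by
              rcases eq_or_lt_of_le hmM with h | h
              · exact h.symm
              exfalso
              have haM : step s t ≤ meet s u := a3 _ h M1.le
              have hdM : step u t ≤ meet s u := d3 _ (by rw [← hmn]; exact h) M2.le
              rcases comp haM hdM with h5 | h5
              · rcases eq_or_lt_of_le h5 with h5 | h5
                · exact irrefl_of prec _ (h5 ▸ had)
                · exact absurd (d3 _ (by rw [← hmn]; exact a1) (haM.trans M2.le)) (not_le_of_gt h5)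
              · rcases eq_or_lt_of_le h5 with h5 | h5
                · exact irrefl_of prec _ (h5 ▸ had)
                · exact absurd (a3 _ (by rw [hmn]; exact d1) (hdM.trans M1.le)) (not_le_of_gt h5)
            have e1 : step s u = step s t := stepEqFst s u t hsu hus hst hts hMm
            have e2 : step u s = step u t := by
              apply stepEqFst u s t hus hsu hut htu
              rw [msymm u s hus hsu, hMm, hmn, msymm t u htu hut]
            exact Or.inr ⟨hsu, hus, by rw [e1, e2]; exact had⟩
          · -- meet s t < meet t u
            have hbn : step t s ≤ meet t u := b3 _ hmn n1.le
            have hus : ¬ u ≤ s := fun h =>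
              absurd (m3 _ (n2.trans_le h) n1) (not_le_of_gt hmn)
            obtain ⟨M1, M2, M3⟩ := hmeet s u hsu hus
            have hMn : meet s u ≤ meet t u := by
              rcases comp M2.le n2.le with h | h
              · exact h
              · exact absurd (m3 _ (h.trans_lt M1) n1) (not_le_of_gt hmn)
            have hMm : meet s u = meet s t :=
              le_antisymm (m3 _ M1 (hMn.trans_lt n1)) (M3 _ m1 (hmn.trans n2))
            have e1 : step s u = step s t := stepEqFst s u t hsu hus hst hts hMm
            obtain ⟨f1, f2, f3⟩ := hstep u s hus hsu
            rw [msymm u s hus hsu, hMm] at f1 f3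
            have e2 : step u s = step t s := by
              have h5 : step u s ≤ step t s := f3 _ b1 (hbn.trans n2.le)
              have h6 : step t s ≤ step u s := b3 _ f1 ((h5.trans hbn).trans n1.le)
              exact le_antisymm h5 h6
            exact Or.inr ⟨hsu, hus, by rw [e1, e2]; exact hab⟩
        · rcases eq_or_lt_of_le hnm with hnm' | hnm'
          · -- meet t u = meet s t (same as the equal case, via symmetry of eq)
            have ebc : step t s = step t u := by
              apply stepEqFst t s u hts hst htu hut
              rw [msymm t s hts hst]; exact hnm'.symm
            have had : prec (step s t) (step u t) := by
              refine trans_of prec hab ?_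
              rw [ebc]; exact hcd
            have hus : ¬ u ≤ s := by
              intro h
              have h1 : step s t ≤ step u t := a3 _ (by rw [← hnm']; exact d1) (d2.trans h)
              have h2 : step u t ≤ step s t := d3 _ (by rw [hnm']; exact a1) (h1.trans d2)
              exact irrefl_of prec _ ((le_antisymm h1 h2) ▸ had)
            obtain ⟨M1, M2, M3⟩ := hmeet s u hsu hus
            have hmM : meet s t ≤ meet s u := M3 _ m1 (by rw [← hnm']; exact n2)
            have hMm : meet s u = meet s t := by
              rcases eq_or_lt_of_le hmM with h | h
              · exact h.symm
              exfalso
              have haM : step s t ≤ meet s u := a3 _ h M1.le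
              have hdM : step u t ≤ meet s u := d3 _ (by rw [hnm']; exact h) M2.le
              rcases comp haM hdM with h5 | h5
              · rcases eq_or_lt_of_le h5 with h5 | h5
                · exact irrefl_of prec _ (h5 ▸ had)
                · exact absurd (d3 _ (by rw [hnm']; exact a1) (haM.trans M2.le)) (not_le_of_gt h5)
              · rcases eq_or_lt_of_le h5 with h5 | h5
                · exact irrefl_of prec _ (h5 ▸ had)
                · exact absurd (a3 _ (by rw [← hnm']; exact d1) (hdM.trans M1.le)) (not_le_of_gt h5)
            have e1 : step s u = step s t := stepEqFst s u t hsu hus hst hts hMm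
            have e2 : step u s = step u t := by
              apply stepEqFst u s t hus hsu hut htu
              rw [msymm u s hus hsu, hMm, ← hnm', msymm t u htu hut]
            exact Or.inr ⟨hsu, hus, by rw [e1, e2]; exact had⟩
          · -- meet t u < meet s t
            have hcm : step t u ≤ meet s t := c3 _ hnm' m2.le
            have hus : ¬ u ≤ s := by
              intro h
              rcases comp m1.le h with h1 | h1
              · rcases eq_or_lt_of_le h1 with rfl | h1
                · exact hut m2.le
                · exact absurd (n3 _ m2 h1) (not_le_of_gt hnm')
              · exact hut (h1.trans m2.le)
            obtain ⟨M1, M2, M3⟩ := hmeet s u hsu hus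
            have hnM : meet t u ≤ meet s u := M3 _ (hnm'.trans m1) n2
            have hMn : meet s u = meet t u := by
              refine le_antisymm ?_ hnM
              rcases comp M1.le m1.le with h | h
              · exact n3 _ (h.trans_lt m2) M2
              · exact absurd (n3 _ m2 (h.trans_lt M2)) (not_le_of_gt hnm')
            obtain ⟨f1, f2, f3⟩ := hstep s u hsu hus
            rw [hMn] at f1 f3
            have e1 : step s u = step t u := by
              have h5 : step s u ≤ step t u := f3 _ c1 (hcm.trans m1.le)
              have h6 : step t u ≤ step s u := c3 _ f1 ((h5.trans hcm).trans m2.le)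
              exact le_antisymm h5 h6
            have e2 : step u s = step u t := by
              apply stepEqFst u s t hus hsu hut htu
              rw [msymm u s hus hsu, hMn, msymm t u htu hut]
            exact Or.inr ⟨hsu, hus, by rw [e1, e2]; exact hcd⟩
  · -- antisymmetry
    intro s t h1 h2
    rw [hle'] at h1 h2
    rcases h1 with h1 | ⟨h1, h1', hab⟩
    · rcases h2 with h2 | ⟨h2, h2', _⟩
      · exact le_antisymm h1 h2
      · exact absurd h1 h2'
    · rcases h2 with h2 | ⟨h2, h2', hba⟩
      · exact absurd h2 h1'
      · exact absurd (trans_of prec hab hba) (irrefl_of prec _)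
  · -- totality
    intro s t
    rw [hle', hle']
    by_cases h1 : s ≤ t
    · exact Or.inl (Or.inl h1)
    by_cases h2 : t ≤ s
    · exact Or.inr (Or.inl h2)
    obtain ⟨m1, m2, m3⟩ := hmeet s t h1 h2
    obtain ⟨a1, a2, a3⟩ := hstep s t h1 h2
    obtain ⟨b1, b2, b3⟩ := hstep t s h2 h1
    have hne : step s t ≠ step t s := by
      intro h
      have has : step s t < s := by
        rcases eq_or_lt_of_le a2 with h' | h'
        · exact absurd (h' ▸ h ▸ b2) h1
        · exact h'
      have hat : step s t < t := by
        rcases eq_or_lt_of_le (h ▸ b2) with h' | h'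
        · exact absurd (h' ▸ a2) h2
        · exact h'
      exact absurd (m3 _ has hat) (not_le_of_gt a1)
    rcases trichotomous_of prec (step s t) (step t s) with h | h | h
    · exact Or.inl (Or.inr ⟨h1, h2, h⟩)
    · exact absurd h hne
    · exact Or.inr (Or.inr ⟨h2, h1, h⟩)
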